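/- For every positive integer n, the shadow of every n-vertex {K4^{3-}, F5}-free 3-graph H with minimum degree δ(H) > n²/12 is K4-free. -/

import Mathlib

set_option linter.unusedSectionVars false


open Finset

section Defs

variable {V : Type*} [DecidableEq V]

/-- The degree of a vertex `v` in the 3-graph `H`: the number of edges containing `v`. -/
def degH (H : Finset (Finset V)) (v : V) : ℕ :=
  (H.filter fun e => v ∈ e).card

/-- `H` contains a copy of the generalized triangle `F₅ = {abc, abd, cde}`. -/
def HasF5 (H : Finset (Finset V)) : Prop :=
  ∃ a b c d e : V,
    a ≠ b ∧ a ≠ c ∧ a ≠ d ∧ a ≠ e ∧ b ≠ c ∧ b ≠ d ∧ b ≠ e ∧ c ≠ d ∧ c ≠ e ∧ d ≠ e ∧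
    ({a, b, c} : Finset V) ∈ H ∧ ({a, b, d} : Finset V) ∈ H ∧ ({c, d, e} : Finset V) ∈ H

/-- `H` contains a copy of `K₄³⁻ = {abc, abd, acd}`. -/
def HasK43m (H : Finset (Finset V)) : Prop :=
  ∃ a b c d : V,
    a ≠ b ∧ a ≠ c ∧ a ≠ d ∧ b ≠ c ∧ b ≠ d ∧ c ≠ d ∧
    ({a, b, c} : Finset V) ∈ H ∧ ({a, b, d} : Finset V) ∈ H ∧ ({a, c, d} : Finset V) ∈ H

/-- `H` is 3-partite: the vertex set can be partitioned into three parts so that every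
edge has at most one vertex in each part. -/
def Tripartite (H : Finset (Finset V)) : Prop :=
  ∃ P : V → Fin 3, ∀ e ∈ H, ∀ u ∈ e, ∀ v ∈ e, u ≠ v → P u ≠ P v

/-- The shadow graph `∂H` of the 3-graph `H`: two distinct vertices are adjacent iff
they lie in a common edge of `H`. -/
def shadowG (H : Finset (Finset V)) : SimpleGraph V where
  Adj u v := u ≠ v ∧ ∃ e ∈ H, u ∈ e ∧ v ∈ e
  symm := by
    constructor
    rintro u v ⟨hne, e, he, hu, hv⟩
    exact ⟨hne.symm, e, he, hv, hu⟩
  loopless := by constructor; rintro u ⟨hne, -⟩; exact hne rfl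

end Defs

section Aux

variable {V : Type*} [DecidableEq V]

lemma tperm12 (a b c : V) : ({a,b,c} : Finset V) = {b,a,c} := by
  ext x; simp; try tauto

lemma tperm23 (a b c : V) : ({a,b,c} : Finset V) = {a,c,b} := by
  ext x; simp; try tauto

lemma trot (a b c : V) : ({a,b,c} : Finset V) = {b,c,a} := by
  ext x; simp; try tauto

lemma pair_card_le (x y : V) : ({x,y} : Finset V).card ≤ 2 :=
  le_trans (card_insert_le _ _) (by simp)

lemma card3_ne {a b c : V} (h : ({a,b,c} : Finset V).card = 3) :
    a ≠ b ∧ a ≠ c ∧ b ≠ c := by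
  refine ⟨?_, ?_, ?_⟩ <;> rintro rfl
  · rw [insert_idem] at h
    have := pair_card_le a c; omega
  · have he : ({a,b,a} : Finset V) = {a,b} := by ext x; simp; try tauto
    rw [he] at h
    have := pair_card_le a b; omega
  · have he : ({a,b,b} : Finset V) = {a,b} := by ext x; simp; try tauto
    rw [he] at h
    have := pair_card_le a b; omega

lemma adj_of_edge {H : Finset (Finset V)} {e : Finset V} {u v : V}
    (he : e ∈ H) (hu : u ∈ e) (hv : v ∈ e) (hne : u ≠ v) : (shadowG H).Adj u v :=
  ⟨hne, e, he, hu, hv⟩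

/-- Key structural lemma: if `abc` and `abd` are edges then no edge contains both
`c` and `d`. -/
lemma keyL {H : Finset (Finset V)} (h3 : ∀ e ∈ H, e.card = 3)
    (hK : ¬ HasK43m H) (hF5 : ¬ HasF5 H) {a b c d : V}
    (h1 : ({a,b,c} : Finset V) ∈ H) (h2 : ({a,b,d} : Finset V) ∈ H) (hcd : c ≠ d) :
    ∀ e ∈ H, ¬ (c ∈ e ∧ d ∈ e) := by
  obtain ⟨hab, hac, hbc⟩ := card3_ne (h3 _ h1)
  obtain ⟨-, had, hbd⟩ := card3_ne (h3 _ h2)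
  rintro e he ⟨hc, hd⟩
  -- find the third vertex of e
  have hde : d ∈ e.erase c := mem_erase.mpr ⟨hcd.symm, hd⟩
  have hcard : ((e.erase c).erase d).card = 1 := by
    rw [card_erase_of_mem hde, card_erase_of_mem hc, h3 _ he]
  obtain ⟨w, hw⟩ := card_eq_one.mp hcard
  have hwmem : w ∈ (e.erase c).erase d := by rw [hw]; exact mem_singleton_self w
  have hwd : w ≠ d := (mem_erase.mp hwmem).1
  have hwc : w ≠ c := (mem_erase.mp (mem_erase.mp hwmem).2).1
  have hew : e = {c, d, w} := by
    have h1' : e.erase c = insert d ((e.erase c).erase d) := (insert_erase hde).symm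
    have h2' : e = insert c (e.erase c) := (insert_erase hc).symm
    rw [h2', h1', hw]
  by_cases hwa : w = a
  · exact hK ⟨a, b, c, d, hab, hac, had, hbc, hbd, hcd, h1, h2, by
      rw [show ({a,c,d} : Finset V) = {c,d,a} from trot a c d, ← hwa, ← hew]; exact he⟩
  · by_cases hwb : w = b
    · exact hK ⟨b, a, c, d, hab.symm, hbc, hbd, hac, had, hcd, by rwa [tperm12], by
        rw [tperm12]; exact h2, by
        rw [show ({b,c,d} : Finset V) = {c,d,b} from trot b c d, ← hwb, ← hew]; exact he⟩
    · exact hF5 ⟨a, b, c, d, w, hab, hac, had, fun h => hwa h.symm, hbc, hbd,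
        fun h => hwb h.symm, hcd, fun h => hwc h.symm, fun h => hwd h.symm,
        h1, h2, by rw [← hew]; exact he⟩

end Aux
section Link

variable {V : Type*} [DecidableEq V]

/-- The link of a vertex: the pairs completing `v` to an edge. -/
def linkH (H : Finset (Finset V)) (v : V) : Finset (Finset V) :=
  (H.filter fun e => v ∈ e).image fun e => e.erase v

lemma card_linkH {H : Finset (Finset V)} (v : V) : (linkH H v).card = degH H v := by
  rw [linkH, degH]
  apply card_image_of_injOn
  intro e he e' he' hee
  have hv : v ∈ e := (mem_filter.mp he).2
  have hv' : v ∈ e' := (mem_filter.mp he').2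
  simp only at hee
  rw [← insert_erase hv, ← insert_erase hv', hee]

lemma linkH_prop {H : Finset (Finset V)} (h3 : ∀ e ∈ H, e.card = 3) {v : V}
    {p : Finset V} (hp : p ∈ linkH H v) :
    p.card = 2 ∧ v ∉ p ∧ insert v p ∈ H := by
  obtain ⟨e, he, rfl⟩ := mem_image.mp hp
  have heH : e ∈ H := (mem_filter.mp he).1
  have hv : v ∈ e := (mem_filter.mp he).2
  refine ⟨?_, notMem_erase v e, by rw [insert_erase hv]; exact heH⟩
  rw [card_erase_of_mem hv, h3 _ heH]

/-- Links of adjacent vertices are disjoint. -/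
lemma linkH_disjoint {H : Finset (Finset V)} (h3 : ∀ e ∈ H, e.card = 3)
    (hK : ¬ HasK43m H) (hF5 : ¬ HasF5 H) {u v : V} (huv : (shadowG H).Adj u v) :
    Disjoint (linkH H u) (linkH H v) := by
  rw [disjoint_left]
  intro p hpu hpv
  obtain ⟨hc2, hunp, heu⟩ := linkH_prop h3 hpu
  obtain ⟨-, hvnp, hev⟩ := linkH_prop h3 hpv
  obtain ⟨x, y, hxy, rfl⟩ := card_eq_two.mp hc2
  have h1 : ({x,y,u} : Finset V) ∈ H := by
    rw [show ({x,y,u} : Finset V) = insert u {x,y} by ext m; simp; tauto]; exact heu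
  have h2 : ({x,y,v} : Finset V) ∈ H := by
    rw [show ({x,y,v} : Finset V) = insert v {x,y} by ext m; simp; tauto]; exact hev
  obtain ⟨hne, e, he, hu', hv'⟩ := huv
  exact keyL h3 hK hF5 h1 h2 hne e he ⟨hu', hv'⟩

/-- Pairs in the union of links over a set are "shadow edges". -/
lemma adj_of_mem_biUnion_linkH {H : Finset (Finset V)} (h3 : ∀ e ∈ H, e.card = 3)
    {S : Finset V} {u v : V} (h : ({u,v} : Finset V) ∈ S.biUnion (linkH H))
    (huv : u ≠ v) : (shadowG H).Adj u v := by
  obtain ⟨c, -, hp⟩ := mem_biUnion.mp h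
  obtain ⟨-, -, he⟩ := linkH_prop h3 hp
  exact adj_of_edge he (by simp) (by simp) huv

end Link
section Turan

variable {V : Type*} [DecidableEq V]

/-- A Turán-type bound: if a symmetric pair system `P` has no `(r+1)`-clique inside `s`,
then the sum of "degrees" over `s` is at most `(1 - 1/r) |s|²`. -/
lemma turanSum (r : ℕ) :
    ∀ (P : Finset (Finset V)) (s : Finset V),
      (∀ p ∈ P, p.card = 2) →
      (∀ T ⊆ s, (∀ x ∈ T, ∀ y ∈ T, x ≠ y → ({x,y} : Finset V) ∈ P) → T.card ≠ r + 1) →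
      ∑ v ∈ s, ((s.filter fun u => ({v,u} : Finset V) ∈ P).card : ℝ)
        ≤ (1 - 1/(r:ℝ)) * (s.card : ℝ)^2 := by
  induction r with
  | zero =>
    intro P s h2 hcf
    have hs : s = ∅ := by
      by_contra hne
      obtain ⟨v, hv⟩ := nonempty_iff_ne_empty.mpr hne
      exact hcf {v} (singleton_subset_iff.mpr hv)
        (by intro a ha b hb hab; simp only [mem_singleton] at ha hb; subst ha; subst hb;
            exact absurd rfl hab) (by simp)
    subst hs; simp
  | succ r ih =>
    intro P s h2 hcf
    rcases s.eq_empty_or_nonempty with rfl | hne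
    · simp
    obtain ⟨x, hx, hmax⟩ :=
      exists_max_image s (fun v => ((s.filter fun u => ({v,u} : Finset V) ∈ P)).card) hne
    set D : V → ℕ := fun v => ((s.filter fun u => ({v,u} : Finset V) ∈ P)).card with hD
    set t : Finset V := s.filter (fun u => ({x,u} : Finset V) ∈ P) with ht
    have htsub : t ⊆ s := filter_subset _ _
    have hΔn : t.card ≤ s.card := card_le_card htsub
    have hxt : x ∉ t := by
      intro hmem
      have hP : ({x,x} : Finset V) ∈ P := (mem_filter.mp hmem).2
      have := h2 _ hP
      simp at this
    -- no (r+1)-clique inside t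
    have hcf' : ∀ T ⊆ t, (∀ a ∈ T, ∀ b ∈ T, a ≠ b → ({a,b} : Finset V) ∈ P) →
        T.card ≠ r + 1 := by
      intro T hT hclq hcard
      refine hcf (insert x T) (insert_subset hx (hT.trans htsub)) ?_ ?_
      · intro a ha b hb hab
        rcases mem_insert.mp ha with rfl | ha'
        · rcases mem_insert.mp hb with rfl | hb'
          · exact absurd rfl hab
          · exact (mem_filter.mp (hT hb')).2
        · rcases mem_insert.mp hb with rfl | hb'
          · have := (mem_filter.mp (hT ha')).2
            rwa [pair_comm]
          · exact hclq a ha' b hb' hab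
      · rw [card_insert_of_notMem (fun h => hxt (hT h)), hcard]
    have hIH := ih P t h2 hcf'
    -- counting
    have hsplit : ∑ v ∈ s, (D v : ℝ) = ∑ v ∈ s \ t, (D v : ℝ) + ∑ v ∈ t, (D v : ℝ) :=
      (Finset.sum_sdiff htsub).symm
    have hcards : (s \ t).card = s.card - t.card := card_sdiff_of_subset htsub
    have hb1 : ∑ v ∈ s \ t, (D v : ℝ) ≤ ((s.card - t.card : ℕ) : ℝ) * (t.card : ℝ) := by
      rw [← hcards]
      calc ∑ v ∈ s \ t, (D v : ℝ) ≤ ∑ _v ∈ s \ t, (t.card : ℝ) := by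
            apply Finset.sum_le_sum
            intro v hv
            have hvs : v ∈ s := (sdiff_subset) hv
            have := hmax v hvs
            have hDx : D x = t.card := rfl
            exact_mod_cast (hDx ▸ this)
        _ = ((s \ t).card : ℝ) * (t.card : ℝ) := by rw [Finset.sum_const, nsmul_eq_mul]
    have hb2 : ∑ v ∈ t, (D v : ℝ)
        ≤ ∑ v ∈ t, ((t.filter fun u => ({v,u} : Finset V) ∈ P).card : ℝ)
          + (t.card : ℝ) * ((s.card - t.card : ℕ) : ℝ) := by
      have : ∀ v ∈ t, (D v : ℝ)
          ≤ ((t.filter fun u => ({v,u} : Finset V) ∈ P).card : ℝ)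
            + ((s.card - t.card : ℕ) : ℝ) := by
        intro v _
        have hsub2 : s.filter (fun u => ({v,u} : Finset V) ∈ P)
            ⊆ (t.filter fun u => ({v,u} : Finset V) ∈ P) ∪ (s \ t) := by
          intro u hu
          obtain ⟨hus, hup⟩ := mem_filter.mp hu
          by_cases hut : u ∈ t
          · exact mem_union_left _ (mem_filter.mpr ⟨hut, hup⟩)
          · exact mem_union_right _ (mem_sdiff.mpr ⟨hus, hut⟩)
        have := (card_le_card hsub2).trans (card_union_le _ _)
        rw [hcards] at this
        exact_mod_cast this
      calc ∑ v ∈ t, (D v : ℝ)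
          ≤ ∑ v ∈ t, (((t.filter fun u => ({v,u} : Finset V) ∈ P).card : ℝ)
              + ((s.card - t.card : ℕ) : ℝ)) := Finset.sum_le_sum this
        _ = _ := by rw [Finset.sum_add_distrib, Finset.sum_const, nsmul_eq_mul]
    -- put together
    set Δ : ℕ := t.card
    set N : ℕ := s.card
    have htot : ∑ v ∈ s, (D v : ℝ)
        ≤ (1 - 1/(r:ℝ)) * (Δ:ℝ)^2 + 2 * ((N - Δ : ℕ):ℝ) * (Δ:ℝ) := by
      rw [hsplit]
      have := add_le_add (add_le_add hb1 hIH) (le_refl ((Δ:ℝ) * ((N - Δ : ℕ):ℝ)))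
      calc ∑ v ∈ s \ t, (D v : ℝ) + ∑ v ∈ t, (D v : ℝ)
          ≤ ((N - Δ : ℕ):ℝ) * (Δ:ℝ) + ((1 - 1/(r:ℝ)) * (Δ:ℝ)^2 + (Δ:ℝ) * ((N - Δ:ℕ):ℝ)) :=
            add_le_add hb1 (hb2.trans (add_le_add hIH (le_refl _)))
        _ = (1 - 1/(r:ℝ)) * (Δ:ℝ)^2 + 2 * ((N - Δ : ℕ):ℝ) * (Δ:ℝ) := by ring
    -- final algebra
    have hcast : ((N - Δ : ℕ) : ℝ) = (N:ℝ) - (Δ:ℝ) := by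
      have : Δ ≤ N := hΔn
      exact Nat.cast_sub this
    rw [hcast] at htot
    refine htot.trans ?_
    rcases Nat.eq_zero_or_pos r with rfl | hr
    · -- r = 0 : then t = ∅
      have ht0 : Δ = 0 := by
        by_contra h0
        have : t.Nonempty := card_pos.mp (Nat.pos_of_ne_zero h0)
        obtain ⟨v, hv⟩ := this
        exact hcf' {v} (singleton_subset_iff.mpr hv)
          (by intro a ha b hb hab; simp only [mem_singleton] at ha hb; subst ha; subst hb;
              exact absurd rfl hab) (by simp)
      rw [ht0]
      push_cast
      norm_num
    · have hR : (1:ℝ) ≤ (r:ℝ) := by exact_mod_cast hr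
      have hR0 : (0:ℝ) < (r:ℝ) := by linarith
      have hR1 : (0:ℝ) < (r:ℝ) + 1 := by linarith
      have hΔ0 : (0:ℝ) ≤ (Δ:ℝ) := Nat.cast_nonneg _
      have hN0 : (0:ℝ) ≤ (N:ℝ) := Nat.cast_nonneg _
      have hΔN : (Δ:ℝ) ≤ (N:ℝ) := by exact_mod_cast hΔn
      have hkey : 2*(r:ℝ)*((r:ℝ)+1)*(Δ:ℝ)*(N:ℝ)
          ≤ ((r:ℝ)+1)^2*(Δ:ℝ)^2 + (r:ℝ)^2*(N:ℝ)^2 := by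
        nlinarith [sq_nonneg (((r:ℝ)+1)*(Δ:ℝ) - (r:ℝ)*(N:ℝ))]
      have hcastr : ((r+1 : ℕ) : ℝ) = (r:ℝ) + 1 := by push_cast; ring
      rw [hcastr, ← sub_nonneg]
      have expand : (1 - 1/((r:ℝ)+1))*(N:ℝ)^2
            - ((1 - 1/(r:ℝ))*(Δ:ℝ)^2 + 2*((N:ℝ)-(Δ:ℝ))*(Δ:ℝ))
          = ((r:ℝ)^2*(N:ℝ)^2 + ((r:ℝ)+1)^2*(Δ:ℝ)^2
              - 2*(r:ℝ)*((r:ℝ)+1)*(Δ:ℝ)*(N:ℝ)) / ((r:ℝ)*((r:ℝ)+1)) := by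
        field_simp
        ring
      rw [expand]
      apply div_nonneg _ (by positivity)
      linarith [hkey]

end Turan
section Count

variable {V : Type*} [DecidableEq V] [Fintype V]

lemma degP_eq (P : Finset (Finset V)) (h2 : ∀ p ∈ P, p.card = 2) (v : V) :
    (univ.filter fun u => ({v,u} : Finset V) ∈ P).card
      = (P.filter fun p => v ∈ p).card := by
  apply card_bij (fun u _ => ({v,u} : Finset V))
  · intro u hu
    have hP : ({v,u} : Finset V) ∈ P := (mem_filter.mp hu).2
    exact mem_filter.mpr ⟨hP, by simp⟩
  · intro u hu u' hu' heq
    have hP : ({v,u} : Finset V) ∈ P := (mem_filter.mp hu).2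
    have hvu : v ≠ u := by
      intro h
      have := h2 _ hP
      rw [← h] at this
      simp at this
    have hmem : u ∈ ({v,u'} : Finset V) := heq ▸ (by simp : u ∈ ({v,u} : Finset V))
    rcases mem_insert.mp hmem with h | h
    · exact absurd h.symm hvu
    · exact mem_singleton.mp h
  · intro p hp
    obtain ⟨hpP, hvp⟩ := mem_filter.mp hp
    obtain ⟨α, β, hab, rfl⟩ := card_eq_two.mp (h2 _ hpP)
    rcases mem_insert.mp hvp with rfl | h
    · exact ⟨β, mem_filter.mpr ⟨mem_univ _, hpP⟩, rfl⟩
    · have hβ : v = β := mem_singleton.mp h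
      subst hβ
      refine ⟨α, mem_filter.mpr ⟨mem_univ _, ?_⟩, pair_comm v α⟩
      rwa [pair_comm v α]

lemma sum_degP (P : Finset (Finset V)) (h2 : ∀ p ∈ P, p.card = 2) :
    ∑ v : V, (univ.filter fun u => ({v,u} : Finset V) ∈ P).card = 2 * P.card := by
  have h1 : ∑ v : V, (univ.filter fun u => ({v,u} : Finset V) ∈ P).card
      = ∑ v : V, (P.filter fun p => v ∈ p).card := by
    exact Finset.sum_congr rfl fun v _ => degP_eq P h2 v
  rw [h1]
  have h2' : ∑ v : V, (P.filter fun p => v ∈ p).card = ∑ p ∈ P, p.card := by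
    simp_rw [card_filter]
    rw [Finset.sum_comm]
    apply Finset.sum_congr rfl
    intro p _
    simp [card_filter, filter_univ_mem]
  rw [h2']
  rw [Finset.sum_congr rfl fun p hp => h2 p hp]
  rw [Finset.sum_const, smul_eq_mul, mul_comm]

end Count
section Engine

variable {V : Type*} [DecidableEq V] [Fintype V]

lemma clique_count {H : Finset (Finset V)} {n : ℕ} (hV : Fintype.card V = n)
    (h3 : ∀ e ∈ H, e.card = 3) (hK : ¬ HasK43m H) (hF5 : ¬ HasF5 H)
    (hδ : ∀ v : V, (n : ℝ)^2/12 < (degH H v : ℝ))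
    {S : Finset V} (hS : S.Nonempty)
    (hclq : ∀ u ∈ S, ∀ v ∈ S, u ≠ v → (shadowG H).Adj u v) (r : ℕ)
    (hnc : ∀ T : Finset V,
      (∀ x ∈ T, ∀ y ∈ T, x ≠ y → ({x,y} : Finset V) ∈ S.biUnion (linkH H)) →
      T.card ≠ r + 1) :
    (S.card : ℝ) * ((n:ℝ)^2/12) < (1 - 1/(r:ℝ)) * (n:ℝ)^2 / 2 := by
  set P := S.biUnion (linkH H) with hP
  have h2 : ∀ p ∈ P, p.card = 2 := by
    intro p hp
    obtain ⟨c, -, hpc⟩ := mem_biUnion.mp hp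
    exact (linkH_prop h3 hpc).1
  have hdisj : ∀ u ∈ S, ∀ v ∈ S, u ≠ v → Disjoint (linkH H u) (linkH H v) :=
    fun u hu v hv huv => linkH_disjoint h3 hK hF5 (hclq u hu v hv huv)
  have hcard : P.card = ∑ v ∈ S, degH H v := by
    rw [hP, card_biUnion hdisj]
    exact Finset.sum_congr rfl fun v _ => card_linkH v
  have hlower : (S.card : ℝ) * ((n:ℝ)^2/12) < (P.card : ℝ) := by
    rw [hcard]
    push_cast
    calc (S.card:ℝ) * ((n:ℝ)^2/12) = ∑ _v ∈ S, ((n:ℝ)^2/12) := by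
          rw [Finset.sum_const, nsmul_eq_mul]
      _ < ∑ v ∈ S, (degH H v : ℝ) := Finset.sum_lt_sum_of_nonempty hS fun v _ => hδ v
  have hturan := turanSum r P univ h2 (fun T _ hT => hnc T hT)
  have hsum := sum_degP P h2
  have hcast : ∑ v ∈ (univ : Finset V),
      ((univ.filter fun u => ({v,u}:Finset V) ∈ P).card : ℝ) = 2 * (P.card : ℝ) := by
    have := congrArg (fun k : ℕ => (k:ℝ)) hsum
    push_cast at this
    exact this
  rw [hcast] at hturan
  rw [card_univ, hV] at hturan
  linarith [hlower, hturan]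

lemma shadow_K6free {H : Finset (Finset V)} {n : ℕ} (hn : 0 < n)
    (hV : Fintype.card V = n)
    (h3 : ∀ e ∈ H, e.card = 3) (hK : ¬ HasK43m H) (hF5 : ¬ HasF5 H)
    (hδ : ∀ v : V, (n : ℝ)^2/12 < (degH H v : ℝ)) :
    (shadowG H).CliqueFree 6 := by
  intro T hT
  have hclq : ∀ u ∈ T, ∀ v ∈ T, u ≠ v → (shadowG H).Adj u v :=
    fun u hu v hv huv => hT.1 (mem_coe.mpr hu) (mem_coe.mpr hv) huv
  have hS : T.Nonempty := card_pos.mp (by rw [hT.2]; norm_num)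
  have hnum := clique_count hV h3 hK hF5 hδ hS hclq n (fun T' _ hcard => by
    have h1 := card_le_univ T'
    rw [hV] at h1
    omega)
  rw [hT.2] at hnum
  have hn1 : (1:ℝ) ≤ (n:ℝ) := by exact_mod_cast hn
  have hexp : (1 - 1/(n:ℝ)) * (n:ℝ)^2 / 2 = (n:ℝ)^2/2 - (n:ℝ)/2 := by
    field_simp
  rw [hexp] at hnum
  norm_num at hnum
  linarith

lemma shadow_K5free {H : Finset (Finset V)} {n : ℕ} (hn : 0 < n)
    (hV : Fintype.card V = n)
    (h3 : ∀ e ∈ H, e.card = 3) (hK : ¬ HasK43m H) (hF5 : ¬ HasF5 H)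
    (hδ : ∀ v : V, (n : ℝ)^2/12 < (degH H v : ℝ)) :
    (shadowG H).CliqueFree 5 := by
  have h6 := shadow_K6free hn hV h3 hK hF5 hδ
  intro T hT
  have hclq : ∀ u ∈ T, ∀ v ∈ T, u ≠ v → (shadowG H).Adj u v :=
    fun u hu v hv huv => hT.1 (mem_coe.mpr hu) (mem_coe.mpr hv) huv
  have hS : T.Nonempty := card_pos.mp (by rw [hT.2]; norm_num)
  have hnum := clique_count hV h3 hK hF5 hδ hS hclq 5 (fun T' hpair hcard => by
    exact h6 T' ⟨fun u hu v hv huv =>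
      adj_of_mem_biUnion_linkH h3 (hpair u (mem_coe.mp hu) v (mem_coe.mp hv) huv) huv,
      hcard⟩)
  rw [hT.2] at hnum
  have hn1 : (1:ℝ) ≤ (n:ℝ) := by exact_mod_cast hn
  norm_num at hnum
  nlinarith

end Engine
section NoFour

variable {V : Type*} [DecidableEq V] [Fintype V]

lemma no4clique {H : Finset (Finset V)} {n : ℕ} (hn : 0 < n)
    (hV : Fintype.card V = n)
    (h3 : ∀ e ∈ H, e.card = 3) (hK : ¬ HasK43m H) (hF5 : ¬ HasF5 H)
    (hδ : ∀ v : V, (n : ℝ)^2/12 < (degH H v : ℝ))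
    {S : Finset V} (hS4 : S.card = 4)
    (hclq : ∀ u ∈ S, ∀ v ∈ S, u ≠ v → (shadowG H).Adj u v) :
    ∀ T : Finset V,
      (∀ a ∈ T, ∀ b ∈ T, a ≠ b → ({a,b} : Finset V) ∈ S.biUnion (linkH H)) →
      T.card ≠ 4 := by
  have hK5 := shadow_K5free hn hV h3 hK hF5 hδ
  intro T hpair hcard
  -- extract the four vertices of T
  obtain ⟨x, hxT⟩ := card_pos.mp (by omega : 0 < T.card)
  have h3c : (T.erase x).card = 3 := by rw [card_erase_of_mem hxT, hcard]
  obtain ⟨y, z, t, hyz, hyt, hzt, herase⟩ := card_eq_three.mp h3c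
  have hyE : y ∈ T.erase x := by rw [herase]; simp
  have hzE : z ∈ T.erase x := by rw [herase]; simp
  have htE : t ∈ T.erase x := by rw [herase]; simp
  have hyT : y ∈ T := mem_of_mem_erase hyE
  have hzT : z ∈ T := mem_of_mem_erase hzE
  have htT : t ∈ T := mem_of_mem_erase htE
  have hxy : x ≠ y := fun h => (mem_erase.mp hyE).1 h.symm
  have hxz : x ≠ z := fun h => (mem_erase.mp hzE).1 h.symm
  have hxt : x ≠ t := fun h => (mem_erase.mp htE).1 h.symm
  -- colors for the six pairs
  have getc : ∀ u v, u ∈ T → v ∈ T → u ≠ v →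
      ∃ c, c ∈ S ∧ c ≠ u ∧ c ≠ v ∧ ({c,u,v} : Finset V) ∈ H := by
    intro u v hu hv huv
    obtain ⟨c, hcS, hp⟩ := mem_biUnion.mp (hpair u hu v hv huv)
    obtain ⟨-, hcnp, hins⟩ := linkH_prop h3 hp
    exact ⟨c, hcS, fun h => hcnp (by rw [h]; simp), fun h => hcnp (by rw [h]; simp), hins⟩
  obtain ⟨c12, hc12S, hc12x, hc12y, e12⟩ := getc x y hxT hyT hxy
  obtain ⟨c13, hc13S, hc13x, hc13z, e13⟩ := getc x z hxT hzT hxz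
  obtain ⟨c14, hc14S, hc14x, hc14t, e14⟩ := getc x t hxT htT hxt
  obtain ⟨c23, hc23y, hc23S', hc23z, e23⟩ := getc y z hyT hzT hyz
  obtain ⟨c24, hc24S, hc24y, hc24t, e24⟩ := getc y t hyT htT hyt
  obtain ⟨c34, hc34S, hc34z, hc34t, e34⟩ := getc z t hzT htT hzt
  -- fix a naming slip for c23
  have hc23S : c23 ∈ S := hc23y
  have hc23y' : c23 ≠ y := hc23S'
  clear hc23S'
  -- oriented versions of the edges
  have e12' : ({c12,y,x} : Finset V) ∈ H := by rw [tperm23]; exact e12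
  have e13' : ({c13,z,x} : Finset V) ∈ H := by rw [tperm23]; exact e13
  have e14' : ({c14,t,x} : Finset V) ∈ H := by rw [tperm23]; exact e14
  have e23' : ({c23,z,y} : Finset V) ∈ H := by rw [tperm23]; exact e23
  have e24' : ({c24,t,y} : Finset V) ∈ H := by rw [tperm23]; exact e24
  have e34' : ({c34,t,z} : Finset V) ∈ H := by rw [tperm23]; exact e34
  -- properness helper
  have prp : ∀ c u v w, v ≠ w → v ∈ T → w ∈ T →
      ({c,u,v} : Finset V) ∈ H → ({c,u,w} : Finset V) ∈ H → False := by
    intro c u v w hvw hvT hwT h1 h2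
    obtain ⟨c', -, -, -, hce⟩ := getc v w hvT hwT hvw
    exact keyL h3 hK hF5 h1 h2 hvw _ hce ⟨by simp, by simp⟩
  -- the twelve distinctness facts between colors of adjacent pairs
  have d12_13 : c12 ≠ c13 := fun h => prp c12 x y z hyz hyT hzT e12 (by rw [h]; exact e13)
  have d12_14 : c12 ≠ c14 := fun h => prp c12 x y t hyt hyT htT e12 (by rw [h]; exact e14)
  have d13_14 : c13 ≠ c14 := fun h => prp c13 x z t hzt hzT htT e13 (by rw [h]; exact e14)
  have d12_23 : c12 ≠ c23 := fun h => prp c12 y x z hxz hxT hzT e12' (by rw [h]; exact e23)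
  have d12_24 : c12 ≠ c24 := fun h => prp c12 y x t hxt hxT htT e12' (by rw [h]; exact e24)
  have d23_24 : c23 ≠ c24 := fun h => prp c23 y z t hzt hzT htT e23 (by rw [h]; exact e24)
  have d13_23 : c13 ≠ c23 := fun h => prp c13 z x y hxy hxT hyT e13' (by rw [h]; exact e23')
  have d13_34 : c13 ≠ c34 := fun h => prp c13 z x t hxt hxT htT e13' (by rw [h]; exact e34)
  have d23_34 : c23 ≠ c34 := fun h => prp c23 z y t hyt hyT htT e23' (by rw [h]; exact e34)
  have d14_24 : c14 ≠ c24 := fun h => prp c14 t x y hxy hxT hyT e14' (by rw [h]; exact e24')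
  have d14_34 : c14 ≠ c34 := fun h => prp c14 t x z hxz hxT hzT e14' (by rw [h]; exact e34')
  have d24_34 : c24 ≠ c34 := fun h => prp c24 t y z hyz hyT hzT e24' (by rw [h]; exact e34')
  -- the missing colors g1 g2 g3 g4
  have gget : ∀ (a b c : V), a ∈ S → b ∈ S → c ∈ S → a ≠ b → a ≠ c → b ≠ c →
      ∃ g, g ∈ S ∧ g ∉ ({a,b,c} : Finset V) ∧
        ∀ s ∈ S, s ≠ g → s ∈ ({a,b,c} : Finset V) := by
    intro a b c haS hbS hcS hab hac hbc
    have hsub : ({a,b,c} : Finset V) ⊆ S := by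
      intro m hm
      rcases mem_insert.mp hm with rfl | hm'
      · exact haS
      rcases mem_insert.mp hm' with rfl | hm''
      · exact hbS
      · rw [mem_singleton.mp hm'']; exact hcS
    have hc3 : ({a,b,c} : Finset V).card = 3 := card_eq_three.mpr ⟨a,b,c,hab,hac,hbc,rfl⟩
    have hcd : (S \ {a,b,c}).card = 1 := by rw [card_sdiff_of_subset hsub, hS4, hc3]
    obtain ⟨g, hg⟩ := card_eq_one.mp hcd
    have hgmem : g ∈ S \ ({a,b,c} : Finset V) := by rw [hg]; exact mem_singleton_self g
    refine ⟨g, (mem_sdiff.mp hgmem).1, (mem_sdiff.mp hgmem).2, ?_⟩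
    intro s hsS hsg
    by_contra hns
    have hmem2 : s ∈ S \ ({a,b,c} : Finset V) := mem_sdiff.mpr ⟨hsS, hns⟩
    rw [hg] at hmem2
    exact hsg (mem_singleton.mp hmem2)
  obtain ⟨g1, hg1S, hg1n, hg1c⟩ := gget c12 c13 c14 hc12S hc13S hc14S d12_13 d12_14 d13_14
  obtain ⟨g2, hg2S, hg2n, hg2c⟩ := gget c12 c23 c24 hc12S hc23S hc24S d12_23 d12_24 d23_24
  obtain ⟨g3, hg3S, hg3n, hg3c⟩ := gget c13 c23 c34 hc13S hc23S hc34S d13_23 d13_34 d23_34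
  obtain ⟨g4, hg4S, hg4n, hg4c⟩ := gget c14 c24 c34 hc14S hc24S hc34S d14_24 d14_34 d24_34
  -- vertex adjacent to each of its colors
  have adj1 : ∀ s ∈ ({c12,c13,c14} : Finset V), (shadowG H).Adj x s := by
    intro s hs
    rcases mem_insert.mp hs with rfl | hs'
    · exact adj_of_edge e12 (by simp) (by simp) hc12x.symm
    rcases mem_insert.mp hs' with rfl | hs''
    · exact adj_of_edge e13 (by simp) (by simp) hc13x.symm
    · rw [mem_singleton.mp hs'']; exact adj_of_edge e14 (by simp) (by simp) hc14x.symm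
  have adj2 : ∀ s ∈ ({c12,c23,c24} : Finset V), (shadowG H).Adj y s := by
    intro s hs
    rcases mem_insert.mp hs with rfl | hs'
    · exact adj_of_edge e12 (by simp) (by simp) hc12y.symm
    rcases mem_insert.mp hs' with rfl | hs''
    · exact adj_of_edge e23 (by simp) (by simp) hc23y'.symm
    · rw [mem_singleton.mp hs'']; exact adj_of_edge e24 (by simp) (by simp) hc24y.symm
  have adj3 : ∀ s ∈ ({c13,c23,c34} : Finset V), (shadowG H).Adj z s := by
    intro s hs
    rcases mem_insert.mp hs with rfl | hs'
    · exact adj_of_edge e13 (by simp) (by simp) hc13z.symm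
    rcases mem_insert.mp hs' with rfl | hs''
    · exact adj_of_edge e23 (by simp) (by simp) hc23z.symm
    · rw [mem_singleton.mp hs'']; exact adj_of_edge e34 (by simp) (by simp) hc34z.symm
  have adj4 : ∀ s ∈ ({c14,c24,c34} : Finset V), (shadowG H).Adj t s := by
    intro s hs
    rcases mem_insert.mp hs with rfl | hs'
    · exact adj_of_edge e14 (by simp) (by simp) hc14t.symm
    rcases mem_insert.mp hs' with rfl | hs''
    · exact adj_of_edge e24 (by simp) (by simp) hc24t.symm
    · rw [mem_singleton.mp hs'']; exact adj_of_edge e34 (by simp) (by simp) hc34t.symm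
  -- if a vertex of T lies in S then its missing color is itself
  have w1 : x ∈ S → g1 = x := by
    intro hxS
    by_contra hne
    have hxcol := hg1c x hxS (fun h => hne h.symm)
    rcases mem_insert.mp hxcol with h | h
    · exact hc12x h.symm
    rcases mem_insert.mp h with h' | h'
    · exact hc13x h'.symm
    · exact hc14x (mem_singleton.mp h').symm
  have w2 : y ∈ S → g2 = y := by
    intro hyS
    by_contra hne
    have hycol := hg2c y hyS (fun h => hne h.symm)
    rcases mem_insert.mp hycol with h | h
    · exact hc12y h.symm
    rcases mem_insert.mp h with h' | h'
    · exact hc23y' h'.symm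
    · exact hc24y (mem_singleton.mp h').symm
  have w3 : z ∈ S → g3 = z := by
    intro hzS
    by_contra hne
    have hzcol := hg3c z hzS (fun h => hne h.symm)
    rcases mem_insert.mp hzcol with h | h
    · exact hc13z h.symm
    rcases mem_insert.mp h with h' | h'
    · exact hc23z h'.symm
    · exact hc34z (mem_singleton.mp h').symm
  have w4 : t ∈ S → g4 = t := by
    intro htS
    by_contra hne
    have htcol := hg4c t htS (fun h => hne h.symm)
    rcases mem_insert.mp htcol with h | h
    · exact hc14t h.symm
    rcases mem_insert.mp h with h' | h'
    · exact hc24t h'.symm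
    · exact hc34t (mem_singleton.mp h').symm
  -- building a K5 when two missing colors coincide
  have K5con : ∀ u w g : V, u ≠ w → (shadowG H).Adj u w →
      (u ∈ S → g = u) → (w ∈ S → g = w) → g ∈ S →
      (∀ s ∈ S, s ≠ g → (shadowG H).Adj u s) →
      (∀ s ∈ S, s ≠ g → (shadowG H).Adj w s) → False := by
    intro u w g hne hadj hgu hgw hgS hau haw
    apply hK5 (insert u (insert w (S.erase g)))
    constructor
    · intro p hp q hq hpq
      simp only [coe_insert, Set.mem_insert_iff, mem_coe, mem_erase] at hp hq
      rcases hp with rfl | rfl | ⟨hpg, hpS⟩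
      · rcases hq with rfl | rfl | ⟨hqg, hqS⟩
        · exact absurd rfl hpq
        · exact hadj
        · exact hau q hqS hqg
      · rcases hq with rfl | rfl | ⟨hqg, hqS⟩
        · exact hadj.symm
        · exact absurd rfl hpq
        · exact haw q hqS hqg
      · rcases hq with rfl | rfl | ⟨hqg, hqS⟩
        · exact (hau p hpS hpg).symm
        · exact (haw p hpS hpg).symm
        · exact hclq p hpS q hqS hpq
    · have hwne : w ∉ S.erase g := by
        intro hw'
        obtain ⟨hwg, hwS⟩ := mem_erase.mp hw'
        exact hwg (hgw hwS).symm
      have hune : u ∉ insert w (S.erase g) := by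
        intro hu'
        rcases mem_insert.mp hu' with h | h
        · exact hne h
        · obtain ⟨hug, huS⟩ := mem_erase.mp h
          exact hug (hgu huS).symm
      rw [card_insert_of_notMem hune, card_insert_of_notMem hwne,
          card_erase_of_mem hgS, hS4]
  -- the six injectivity facts
  have g12 : g1 ≠ g2 := by
    intro h
    exact K5con x y g1 hxy (adj_of_edge e12 (by simp) (by simp) hxy) w1
      (fun hyS => by rw [h]; exact w2 hyS) hg1S
      (fun s hsS hsg => adj1 s (hg1c s hsS hsg))
      (fun s hsS hsg => adj2 s (hg2c s hsS (by rw [← h]; exact hsg)))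
  have g13 : g1 ≠ g3 := by
    intro h
    exact K5con x z g1 hxz (adj_of_edge e13 (by simp) (by simp) hxz) w1
      (fun hzS => by rw [h]; exact w3 hzS) hg1S
      (fun s hsS hsg => adj1 s (hg1c s hsS hsg))
      (fun s hsS hsg => adj3 s (hg3c s hsS (by rw [← h]; exact hsg)))
  have g14 : g1 ≠ g4 := by
    intro h
    exact K5con x t g1 hxt (adj_of_edge e14 (by simp) (by simp) hxt) w1
      (fun htS => by rw [h]; exact w4 htS) hg1S
      (fun s hsS hsg => adj1 s (hg1c s hsS hsg))
      (fun s hsS hsg => adj4 s (hg4c s hsS (by rw [← h]; exact hsg)))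
  have g23 : g2 ≠ g3 := by
    intro h
    exact K5con y z g2 hyz (adj_of_edge e23 (by simp) (by simp) hyz) w2
      (fun hzS => by rw [h]; exact w3 hzS) hg2S
      (fun s hsS hsg => adj2 s (hg2c s hsS hsg))
      (fun s hsS hsg => adj3 s (hg3c s hsS (by rw [← h]; exact hsg)))
  have g24 : g2 ≠ g4 := by
    intro h
    exact K5con y t g2 hyt (adj_of_edge e24 (by simp) (by simp) hyt) w2
      (fun htS => by rw [h]; exact w4 htS) hg2S
      (fun s hsS hsg => adj2 s (hg2c s hsS hsg))
      (fun s hsS hsg => adj4 s (hg4c s hsS (by rw [← h]; exact hsg)))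
  have g34 : g3 ≠ g4 := by
    intro h
    exact K5con z t g3 hzt (adj_of_edge e34 (by simp) (by simp) hzt) w3
      (fun htS => by rw [h]; exact w4 htS) hg3S
      (fun s hsS hsg => adj3 s (hg3c s hsS hsg))
      (fun s hsS hsg => adj4 s (hg4c s hsS (by rw [← h]; exact hsg)))
  -- S is exactly {g1,g2,g3,g4}
  have hgcard : ({g1,g2,g3,g4} : Finset V).card = 4 := by
    rw [card_insert_of_notMem (by simp [g12, g13, g14]),
        card_insert_of_notMem (by simp [g23, g24]),
        card_insert_of_notMem (by simp [g34]), card_singleton]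
  have hsubg : ({g1,g2,g3,g4} : Finset V) ⊆ S := by
    intro m hm
    simp only [mem_insert, mem_singleton] at hm
    rcases hm with rfl | rfl | rfl | rfl <;> assumption
  have hSeq : ({g1,g2,g3,g4} : Finset V) = S :=
    eq_of_subset_of_card_le hsubg (by rw [hS4, hgcard])
  -- each color is one of the two "opposite" missing colors
  have memS : ∀ c, c ∈ S → c = g1 ∨ c = g2 ∨ c = g3 ∨ c = g4 := by
    intro c hc
    rw [← hSeq] at hc
    simpa using hc
  have mem12 : c12 = g3 ∨ c12 = g4 := by
    rcases memS c12 hc12S with h | h | h | h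
    · exact absurd (by rw [← h]; simp : g1 ∈ ({c12,c13,c14} : Finset V)) hg1n
    · exact absurd (by rw [← h]; simp : g2 ∈ ({c12,c23,c24} : Finset V)) hg2n
    · exact Or.inl h
    · exact Or.inr h
  have mem13 : c13 = g2 ∨ c13 = g4 := by
    rcases memS c13 hc13S with h | h | h | h
    · exact absurd (by rw [← h]; simp : g1 ∈ ({c12,c13,c14} : Finset V)) hg1n
    · exact Or.inl h
    · exact absurd (by rw [← h]; simp : g3 ∈ ({c13,c23,c34} : Finset V)) hg3n
    · exact Or.inr h
  have mem14 : c14 = g2 ∨ c14 = g3 := by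
    rcases memS c14 hc14S with h | h | h | h
    · exact absurd (by rw [← h]; simp : g1 ∈ ({c12,c13,c14} : Finset V)) hg1n
    · exact Or.inl h
    · exact Or.inr h
    · exact absurd (by rw [← h]; simp : g4 ∈ ({c14,c24,c34} : Finset V)) hg4n
  have mem23 : c23 = g1 ∨ c23 = g4 := by
    rcases memS c23 hc23S with h | h | h | h
    · exact Or.inl h
    · exact absurd (by rw [← h]; simp : g2 ∈ ({c12,c23,c24} : Finset V)) hg2n
    · exact absurd (by rw [← h]; simp : g3 ∈ ({c13,c23,c34} : Finset V)) hg3n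
    · exact Or.inr h
  have mem24 : c24 = g1 ∨ c24 = g3 := by
    rcases memS c24 hc24S with h | h | h | h
    · exact Or.inl h
    · exact absurd (by rw [← h]; simp : g2 ∈ ({c12,c23,c24} : Finset V)) hg2n
    · exact Or.inr h
    · exact absurd (by rw [← h]; simp : g4 ∈ ({c14,c24,c34} : Finset V)) hg4n
  -- final case analysis
  rcases mem12 with h12 | h12
  · have h14 : c14 = g2 := by
      rcases mem14 with h | h
      · exact h
      · exact absurd (h12.trans h.symm) d12_14
    have h13 : c13 = g4 := by
      rcases mem13 with h | h
      · exact absurd (h.trans h14.symm) d13_14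
      · exact h
    have h24 : c24 = g1 := by
      rcases mem24 with h | h
      · exact h
      · exact absurd (h12.trans h.symm) d12_24
    have h23 : c23 = g4 := by
      rcases mem23 with h | h
      · exact absurd (h.trans h24.symm) d23_24
      · exact h
    exact d13_23 (h13.trans h23.symm)
  · have h13 : c13 = g2 := by
      rcases mem13 with h | h
      · exact h
      · exact absurd (h12.trans h.symm) d12_13
    have h14 : c14 = g3 := by
      rcases mem14 with h | h
      · exact absurd (h13.trans h.symm) d13_14
      · exact h
    have h23 : c23 = g1 := by
      rcases mem23 with h | h
      · exact h
      · exact absurd (h12.trans h.symm) d12_23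
    have h24 : c24 = g3 := by
      rcases mem24 with h | h
      · exact absurd (h23.trans h.symm) d23_24
      · exact h
    exact d14_24 (h14.trans h24.symm)

end NoFour
/-- For every positive integer `n`, the shadow of every `n`-vertex `{K₄³⁻, F₅}`-free
3-graph with minimum degree greater than `n²/12` is `K₄`-free. -/
theorem K43m_F5_shadow_K4_free (n : ℕ) (hn : 0 < n)
    (V : Type*) [Fintype V] [DecidableEq V] (hV : Fintype.card V = n)
    (H : Finset (Finset V)) (h3 : ∀ e ∈ H, e.card = 3)
    (hK : ¬ HasK43m H) (hF5 : ¬ HasF5 H)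
    (hδ : ∀ v : V, (n : ℝ) ^ 2 / 12 < (degH H v : ℝ)) :
    (shadowG H).CliqueFree 4 := by

  intro T hT
  have hclq : ∀ u ∈ T, ∀ v ∈ T, u ≠ v → (shadowG H).Adj u v :=
    fun u hu v hv huv => hT.1 (mem_coe.mpr hu) (mem_coe.mpr hv) huv
  have hS : T.Nonempty := card_pos.mp (by rw [hT.2]; norm_num)
  have hnum := clique_count hV h3 hK hF5 hδ hS hclq 3
    (no4clique hn hV h3 hK hF5 hδ hT.2 hclq)
  rw [hT.2] at hnum
  norm_num at hnum
  linarith
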